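/- For positive reals x_1,...,x_n with M = max x_i, and positive weights α_i summing to 1, the gap ∑ α_i x_i − ∏ x_i^{α_i} is at least (1/(2M)) ∑ α_i (x_i − ∑_k α_k x_k)^2. -/

import Mathlib

open Finset

lemma exp_cubic_bound {v : ℝ} (h0 : 0 ≤ v) (h1 : v ≤ 1) :
    Real.exp v ≤ 1 + v + v ^ 2 / 2 + (2 / 9) * v ^ 3 := by
  have h := Real.exp_bound' h0 h1 (n := 3) (by norm_num)
  have : (∑ m ∈ Finset.range 3, v ^ m / m.factorial) = 1 + v + v ^ 2 / 2 := by
    norm_num [Finset.sum_range_succ, Nat.factorial]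
  rw [this] at h
  calc Real.exp v ≤ 1 + v + v ^ 2 / 2 + v ^ 3 * (3 + 1) / ((3:ℕ).factorial * 3) := h
    _ ≤ 1 + v + v ^ 2 / 2 + (2 / 9) * v ^ 3 := by
        norm_num [Nat.factorial]; nlinarith [pow_nonneg h0 3]

lemma key_ineq {v : ℝ} (h0 : 0 ≤ v) (h1 : v ≤ 1) :
    (1 - v) * (Real.exp v - 1 - v) ≤ v ^ 2 / 2 := by
  have h := exp_cubic_bound h0 h1
  nlinarith [pow_nonneg h0 3, pow_nonneg h0 4]

lemma exp_neg_quadratic {u : ℝ} (hu : 0 ≤ u) :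
    Real.exp (-u) ≤ 1 - u + u ^ 2 / 2 := by
  have h := Real.quadratic_le_exp_of_nonneg hu
  have h3 : ∑ i ∈ Finset.range 4, u ^ i / i.factorial ≤ Real.exp u :=
    Real.sum_le_exp_of_nonneg hu 4
  have h3' : 1 + u + u ^ 2 / 2 + u ^ 3 / 6 ≤ Real.exp u := by
    have : (∑ i ∈ Finset.range 4, u ^ i / i.factorial) = 1 + u + u ^ 2 / 2 + u ^ 3 / 6 := by
      norm_num [Finset.sum_range_succ, Nat.factorial]
    linarith [this ▸ h3]
  have hprod : Real.exp (-u) * Real.exp u = 1 := by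
    rw [← Real.exp_add]; simp
  have hpos : 0 < Real.exp u := Real.exp_pos u
  have hne : Real.exp (-u) = 1 / Real.exp u := by
    field_simp at hprod ⊢; linarith
  rw [hne, div_le_iff₀ hpos]
  calc (1:ℝ) = 1 := rfl
    _ ≤ (1 - u + u ^ 2 / 2) * (1 + u + u ^ 2 / 2 + u ^ 3 / 6) := by nlinarith [pow_nonneg hu 2, pow_nonneg hu 3, pow_nonneg hu 4, pow_nonneg hu 5]
    _ ≤ (1 - u + u ^ 2 / 2) * Real.exp u := by
        have hq : 0 < 1 - u + u ^ 2 / 2 := by nlinarith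
        exact mul_le_mul_of_nonneg_left h3' hq.le

lemma lemA {M x A : ℝ} (hM : 0 < M) (hx : 0 < x) (hxM : x ≤ M) (hA : A ≤ M) :
    x * Real.exp (-((x - A) / M)) ≤ x - x * (x - A) / M + (x - A) ^ 2 / (2 * M) := by
  set u : ℝ := (x - A) / M with hu
  have hxA : x - A = M * u := by rw [hu, mul_div_assoc', mul_div_cancel_left₀ _ hM.ne']
  rcases le_or_gt 0 u with hu0 | hu0
  · -- u ≥ 0 : use exp(-u) ≤ 1 - u + u²/2
    have h := exp_neg_quadratic hu0
    have : x * Real.exp (-u) ≤ x * (1 - u + u ^ 2 / 2) :=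
      mul_le_mul_of_nonneg_left h hx.le
    have e1 : x - x * (x - A) / M + (x - A) ^ 2 / (2 * M) = x - x * u + M * u ^ 2 / 2 := by
      rw [hxA]; field_simp
    rw [e1]
    nlinarith [sq_nonneg u, mul_le_mul_of_nonneg_right hxM (sq_nonneg u)]
  · -- u < 0 : set v = -u ∈ (0, 1)
    set v : ℝ := -u with hv
    have hv0 : 0 < v := by simp [hv]; linarith
    have hv1 : v < 1 := by
      have : x - A = -(M * v) := by rw [hxA]; ring
      nlinarith
    have hxle : x ≤ M * (1 - v) := by
      have : x - A = -(M * v) := by rw [hxA]; ring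
      nlinarith
    have hexp : 0 ≤ Real.exp v - 1 - v := by
      have := Real.add_one_le_exp v; linarith
    have hkey := key_ineq hv0.le hv1.le
    have h1 : x * (Real.exp v - 1 - v) ≤ M * (1 - v) * (Real.exp v - 1 - v) :=
      mul_le_mul_of_nonneg_right hxle hexp
    have h2 : M * ((1 - v) * (Real.exp v - 1 - v)) ≤ M * (v ^ 2 / 2) :=
      mul_le_mul_of_nonneg_left hkey hM.le
    have hgoal : x * Real.exp v ≤ x + x * v + M * v ^ 2 / 2 := by nlinarith
    have huv : u = -v := by rw [hv]; ring
    have e1 : x - x * (x - A) / M + (x - A) ^ 2 / (2 * M) = x + x * v + M * v ^ 2 / 2 := by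
      rw [hxA, huv]; field_simp; ring
    rw [e1]
    exact hgoal

theorem cartwright_field_lower (n : ℕ) (x α : Fin (n + 1) → ℝ)
    (hx : ∀ i, 0 < x i) (hα : ∀ i, 0 < α i) (hαs : ∑ i, α i = 1) :
    (1 / (2 * Finset.univ.sup' Finset.univ_nonempty x)) *
        ∑ i, α i * (x i - ∑ k, α k * x k) ^ 2 ≤
      ∑ i, α i * x i - ∏ i, x i ^ α i := by
  set M : ℝ := Finset.univ.sup' Finset.univ_nonempty x with hMdef
  have hxM : ∀ i, x i ≤ M := fun i => Finset.le_sup' x (Finset.mem_univ i)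
  have hM : 0 < M := lt_of_lt_of_le (hx 0) (hxM 0)
  set A : ℝ := ∑ k, α k * x k with hAdef
  have hA_le : A ≤ M := by
    calc A ≤ ∑ k, α k * M := Finset.sum_le_sum fun i _ =>
          mul_le_mul_of_nonneg_left (hxM i) (hα i).le
      _ = M := by rw [← Finset.sum_mul, hαs, one_mul]
  have hsum0 : ∑ i, α i * (x i - A) = 0 := by
    simp only [mul_sub]
    rw [Finset.sum_sub_distrib, ← Finset.sum_mul, hαs, one_mul]
    simp [hAdef]
  set z : Fin (n + 1) → ℝ := fun i => x i * Real.exp (-((x i - A) / M)) with hz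
  have hzpos : ∀ i, 0 < z i := fun i => mul_pos (hx i) (Real.exp_pos _)
  -- step 1: ∏ x^α = ∏ z^α
  have hprod : ∏ i, x i ^ α i = ∏ i, z i ^ α i := by
    have : ∀ i, z i ^ α i = x i ^ α i * Real.exp (-((x i - A) / M) * α i) := by
      intro i
      rw [hz]
      rw [Real.mul_rpow (hx i).le (Real.exp_pos _).le, ← Real.exp_mul]
    rw [Finset.prod_congr rfl fun i _ => this i, Finset.prod_mul_distrib,
      ← Real.exp_sum]
    have : ∑ i, -((x i - A) / M) * α i = 0 := by
      have : ∑ i, -((x i - A) / M) * α i = (-(1 / M)) * ∑ i, α i * (x i - A) := by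
        rw [Finset.mul_sum]; exact Finset.sum_congr rfl fun i _ => by ring
      rw [this, hsum0, mul_zero]
    rw [this, Real.exp_zero, mul_one]
  -- step 2: AM-GM
  have hamgm : ∏ i, z i ^ α i ≤ ∑ i, α i * z i :=
    Real.geom_mean_le_arith_mean_weighted Finset.univ α z
      (fun i _ => (hα i).le) hαs (fun i _ => (hzpos i).le)
  -- step 3: pointwise bound
  have hpt : ∑ i, α i * z i ≤
      ∑ i, α i * (x i - x i * (x i - A) / M + (x i - A) ^ 2 / (2 * M)) :=
    Finset.sum_le_sum fun i _ =>
      mul_le_mul_of_nonneg_left (lemA hM (hx i) (hxM i) hA_le) (hα i).le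
  -- step 4: compute the sum
  have hcomp : ∑ i, α i * (x i - x i * (x i - A) / M + (x i - A) ^ 2 / (2 * M)) =
      A - (1 / (2 * M)) * ∑ i, α i * (x i - A) ^ 2 := by
    have he : ∀ i, α i * (x i - x i * (x i - A) / M + (x i - A) ^ 2 / (2 * M)) =
        α i * x i - (1 / (2 * M)) * (α i * (x i - A) ^ 2) - (A / M) * (α i * (x i - A)) := by
      intro i
      have hMne : M ≠ 0 := hM.ne'
      field_simp
      ring
    rw [Finset.sum_congr rfl fun i _ => he i]
    rw [Finset.sum_sub_distrib, Finset.sum_sub_distrib, ← Finset.mul_sum, ← Finset.mul_sum,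
      hsum0, mul_zero, sub_zero, hAdef]
  have : ∏ i, x i ^ α i ≤ A - (1 / (2 * M)) * ∑ i, α i * (x i - A) ^ 2 := by
    rw [hprod, ← hcomp]; exact le_trans hamgm hpt
  linarith
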